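/- Weak forward round tripping of biparsers is preserved by bind when the continuation is an injective arrow: if p : Bp u v is weak forward round tripping, k : v → Bp u w is such that each k v is weak forward round tripping, and k is an injective arrow into the parser monad and printer monad (i.e., there exists k' : w → v such that the parse and print outputs of k z determine z = k' of that output), then p >>= k is weak forward round tripping. -/

import Mathlib

/-- A biparser: a parser together with a printer. -/
structure Bp (u v : Type) where
  parse : List Char → v × List Char
  print : u → Option (v × List Char)

def Bp.ret {u v : Type} (x : v) : Bp u v :=
  ⟨fun s => (x, s), fun _ => some (x, [])⟩

def Bp.bind {u v w : Type} (p : Bp u v) (k : v → Bp u w) : Bp u w :=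
  ⟨fun s => (k (p.parse s).1).parse (p.parse s).2,
   fun x => (p.print x).bind (fun vs =>
     ((k vs.1).print x).map (fun ws => (ws.1, vs.2 ++ ws.2)))⟩

def Bp.comap {u u' v : Type} (f : u → Option u') (p : Bp u' v) : Bp u v :=
  ⟨p.parse, fun x => (f x).bind p.print⟩

/-- Weak backward round tripping. -/
def WeakBackward {u v : Type} (p : Bp u v) : Prop :=
  ∀ (x : u) (y : v) (s s' : List Char),
    p.print x = some (y, s) → p.parse (s ++ s') = (y, s')

/-- Weak forward round tripping. -/
def WeakForward {u v : Type} (p : Bp u v) : Prop :=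
  ∀ (x : u) (y : v) (s0 s1 s01 : List Char),
    p.parse s01 = (y, s1) → p.print x = some (y, s0) → s01 = s0 ++ s1

theorem weakForward_bind (u v w : Type) (p : Bp u v) (k : v → Bp u w)
    (hp : WeakForward p) (hk : ∀ y : v, WeakForward (k y))
    (hinj : ∃ k' : w → v,
      (∀ (z : v) (s : List Char) (w0 : w), ((k z).parse s).1 = w0 → z = k' w0) ∧
      (∀ (z : v) (x : u) (w0 : w) (t : List Char),
        (k z).print x = some (w0, t) → z = k' w0)) :
    WeakForward (Bp.bind p k) := by
  obtain ⟨k', hkp, hkq⟩ := hinj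
  intro x y s0 s1 s01 hparse hprint
  simp only [Bp.bind, Option.bind_eq_some_iff, Option.map_eq_some_iff] at hparse hprint
  obtain ⟨⟨b, t0⟩, hb, ⟨y', t1⟩, hy', heq⟩ := hprint
  cases heq
  set a := (p.parse s01).1 with ha
  set s' := (p.parse s01).2 with hs'
  have hab : a = b := by
    have h1 : a = k' y' := hkp a s' y' (by rw [hparse])
    have h2 : b = k' y' := hkq b x y' t1 hy'
    rw [h1, h2]
  have e1 : s01 = t0 ++ s' := hp x a t0 s' s01 (by rw [ha, hs']) (hab ▸ hb)
  have e2 : s' = t1 ++ s1 := (hk a) x y' t1 s1 s' hparse (hab ▸ hy')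
  rw [e1, e2, List.append_assoc]
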